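/- arXiv:nlin/0102019 — 2 statements merged into one kernel-verified Lean document; each statement's English description precedes it below -/
import Mathlib

section
/- Let Λ and A be 2×2 complex matrices with tr(A) = 0, [Λ, A] = Λ, and Λ ≠ 0. Then det(A) = −1/4, i.e., the eigenvalues of A are ±1/2. -/
theorem stmt_2 (Λ A : Matrix (Fin 2) (Fin 2) ℂ)
    (hA : A.trace = 0) (hcomm : Λ * A - A * Λ = Λ) (hΛ : Λ ≠ 0) :
    A.det = -1/4 := by
  by_contra hdet
  apply hΛ
  rw [Matrix.trace_fin_two] at hA
  rw [Matrix.det_fin_two] at hdet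
  have hd : A 1 1 = -A 0 0 := by linear_combination hA
  rw [← Matrix.ext_iff] at hcomm
  have e11 := hcomm 0 0
  have e12 := hcomm 0 1
  have e21 := hcomm 1 0
  have e22 := hcomm 1 1
  simp only [Matrix.sub_apply, Matrix.mul_apply, Fin.sum_univ_two] at e11 e12 e21 e22
  rw [hd] at e12 e21 e22 hdet
  set a := A 0 0
  set b := A 0 1
  set c := A 1 0
  set p := Λ 0 0
  set q := Λ 0 1
  set r := Λ 1 0
  set s := Λ 1 1
  have hK : 4*a^2 + 4*b*c - 1 ≠ 0 := by
    intro h; apply hdet; linear_combination (-1/4 : ℂ) * h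
  have hs : s = -p := by linear_combination -e11 - e22
  rw [hs] at e12 e21
  have hp2 : p^2 + q*r = 0 := by
    linear_combination (-p)*e11 + (-r/2)*e12 + (-q/2)*e21
  have hp : p = 0 := by
    have h0 : p * (4*a^2 + 4*b*c - 1) = 0 := by
      linear_combination (-(4*a^2-1))*e11 + (-c*(2*a-1))*e12 + (-b*(2*a+1))*e21
    rcases mul_eq_zero.mp h0 with h | h
    · exact h
    · exact absurd h hK
  have hq : q = 0 := by
    have h0 : q^2 * (4*a^2 + 4*b*c - 1) = 0 := by
      linear_combination 4*b^2*hp2 + 4*b*q*e11 - (2*b*p + (2*a-1)*q)*e12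
    rcases mul_eq_zero.mp h0 with h | h
    · exact pow_eq_zero_iff (by norm_num) |>.mp h
    · exact absurd h hK
  have hr : r = 0 := by
    have h0 : r^2 * (4*a^2 + 4*b*c - 1) = 0 := by
      linear_combination 4*c^2*hp2 - 4*c*r*e11 + (2*c*p + (2*a+1)*r)*e21
    rcases mul_eq_zero.mp h0 with h | h
    · exact pow_eq_zero_iff (by norm_num) |>.mp h
    · exact absurd h hK
  have hs0 : s = 0 := by rw [hs, hp, neg_zero]
  ext i j
  fin_cases i <;> fin_cases j <;>
    simp only [Matrix.zero_apply] <;> assumption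
end

section
/- Let Λ and A be 2×2 complex matrices with tr(A) = 0, a² + bc = 1/4 where a = A₁₁, b = A₁₂, c = A₂₁, and a ≠ −1/2. If [Λ, A] = Λ, then there exists μ ∈ ℂ such that Λ₁₁ = −μ(a+1/2)b, Λ₁₂ = −μb², Λ₂₁ = μ(a+1/2)², Λ₂₂ = μ(a+1/2)b. (Uniqueness of the solution family.) -/
theorem stmt_5 (Λ A : Matrix (Fin 2) (Fin 2) ℂ)
    (hA : A.trace = 0)
    (h : A 0 0 ^ 2 + A 0 1 * A 1 0 = 1/4)
    (ha : A 0 0 ≠ -1/2)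
    (hcomm : Λ * A - A * Λ = Λ) :
    ∃ μ : ℂ, Λ 0 0 = -μ * (A 0 0 + 1/2) * A 0 1 ∧
      Λ 0 1 = -μ * A 0 1 ^ 2 ∧
      Λ 1 0 = μ * (A 0 0 + 1/2) ^ 2 ∧
      Λ 1 1 = μ * (A 0 0 + 1/2) * A 0 1 := by
  have h00 := congrFun (congrFun hcomm 0) 0
  have h01 := congrFun (congrFun hcomm 0) 1
  have h10 := congrFun (congrFun hcomm 1) 0
  have h11 := congrFun (congrFun hcomm 1) 1
  simp only [Matrix.mul_apply, Fin.sum_univ_two, Matrix.sub_apply] at h00 h01 h10 h11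
  rw [Matrix.trace_fin_two] at hA
  have ht : A 0 0 + 1/2 ≠ 0 := fun h' => ha (by linear_combination h')
  have hs : Λ 1 1 = -Λ 0 0 := by linear_combination -h00 - h11
  by_cases hb : A 0 1 = 0
  · have haval : A 0 0 = 1/2 := by
      have hz : (A 0 0 - 1/2) * (A 0 0 + 1/2) = 0 := by
        linear_combination h - A 1 0 * hb
      rcases mul_eq_zero.1 hz with h' | h'
      · linear_combination h'
      · exact absurd h' ht
    have hq : Λ 0 1 = 0 := by
      have h2 : Λ 0 1 * 2 = 0 := by
        linear_combination Λ 0 1 * hA - 2 * Λ 0 1 * haval - h01 + (Λ 0 0 - Λ 1 1) * hb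
      exact (mul_eq_zero.1 h2).resolve_right two_ne_zero
    have hp : Λ 0 0 = 0 := by
      linear_combination -h00 + A 1 0 * hq - Λ 1 0 * hb
    refine ⟨Λ 1 0, ?_, ?_, ?_, ?_⟩
    · rw [hp, hb]; ring
    · rw [hq, hb]; ring
    · rw [haval]; ring
    · rw [hs, hp, hb]; ring
  · have hq : Λ 0 1 * (A 0 0 + 1/2) = A 0 1 * Λ 0 0 := by
      linear_combination (-(1/2)) * h01 + (1/2) * Λ 0 1 * hA - (A 0 1 / 2) * hs
    have hr : Λ 1 0 * A 0 1 = -Λ 0 0 * (A 0 0 + 1/2) := by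
      have hz : (Λ 1 0 * A 0 1 + Λ 0 0 * (A 0 0 + 1/2)) * (A 0 0 + 1/2) = 0 := by
        linear_combination (-(A 0 0 + 1/2)) * h00 + A 1 0 * hq + Λ 0 0 * h
      rcases mul_eq_zero.1 hz with h' | h'
      · linear_combination h'
      · exact absurd h' ht
    have hinv : ((A 0 0 + 1/2) * A 0 1) * ((A 0 0 + 1/2) * A 0 1)⁻¹ = 1 :=
      mul_inv_cancel₀ (mul_ne_zero ht hb)
    refine ⟨-Λ 0 0 * ((A 0 0 + 1/2) * A 0 1)⁻¹, ?_, ?_, ?_, ?_⟩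
    · linear_combination -Λ 0 0 * hinv
    · linear_combination (A 0 1 * ((A 0 0 + 1/2) * A 0 1)⁻¹) * hq - Λ 0 1 * hinv
    · linear_combination ((A 0 0 + 1/2) * ((A 0 0 + 1/2) * A 0 1)⁻¹) * hr - Λ 1 0 * hinv
    · linear_combination hs + Λ 0 0 * hinv
end
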